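/- The three-point Virasoro algebra V = W \oplus C c_1 \oplus C c_2, with W the three-point Witt algebra and brackets [d_m, d_n] = (n-m)(d_{m+n+1} + 4 d_{m+n}) + \phi_1(d_m,d_n) c_1 + \phi_2(d_m,d_n) c_2 (and similarly for the other pairs), with c_1, c_2 central, is a Lie algebra (the Jacobi identity holds). -/

import Mathlib

/-- Basis index for the three-point Virasoro algebra: `Sum.inl (false, n) ↔ d_n`,
`Sum.inl (true, n) ↔ d¹_n`, `Sum.inr false ↔ c₁`, `Sum.inr true ↔ c₂`. -/
abbrev VirIdx : Type := (Bool × ℤ) ⊕ Bool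

/-- The underlying space of the three-point Virasoro algebra. -/
abbrev VirV : Type := VirIdx →₀ ℂ

noncomputable def eV (p : VirIdx) : VirV := Finsupp.single p 1

/-- The odd double factorial `j‼` extended to negative odd integers by the
convention `(-2k-1)‼ = (-1)ᵏ/(2k-1)‼`. -/
noncomputable def oddDF (j : ℤ) : ℂ :=
  if -1 ≤ j then (Nat.doubleFactorial j.toNat : ℂ)
  else (-1) ^ ((-j - 1) / 2).toNat / (Nat.doubleFactorial (-j - 2).toNat : ℂ)

/-- `1/j!`, extended by `0` for negative `j`. -/
noncomputable def invFact (j : ℤ) : ℂ :=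
  if 0 ≤ j then ((j.toNat).factorial : ℂ)⁻¹ else 0

/-- `φ₁(d¹_k, d_l) = 6(-1)^{k+l} 2^{k+l} (k-1)k l (2k+2l-3)‼/(k+l+1)!`. -/
noncomputable def phiMix (k l : ℤ) : ℂ :=
  6 * (-1 : ℂ) ^ (k + l) * (2 : ℂ) ^ (k + l) * ((k : ℂ) - 1) * k * l *
    oddDF (2 * k + 2 * l - 3) * invFact (k + l + 1)

/-- The cocycle `φ₁` on basis elements. -/
noncomputable def phiBasis : Bool × ℤ → Bool × ℤ → ℂ
  | (true, k), (true, l) =>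
      (if k + l = 1 then 2 * ((l : ℂ) ^ 2 - l) * (2 * l - 1) else 0) +
        (if k + l = 0 then (l : ℂ) ^ 3 - l else 0)
  | (true, k), (false, l) => phiMix k l
  | (false, k), (true, l) => -phiMix l k
  | (false, k), (false, l) =>
      (if k + l = -2 then (l : ℂ) * (l + 1) * (l + 2) else 0) +
        (if k + l = -1 then 4 * (l : ℂ) * (2 * l + 1) * (l + 1) else 0) +
          (if k + l = 0 then 4 * (l : ℂ) * (2 * l - 1) * (2 * l + 1) else 0)

/-- The cocycle `φ₂`: `-2φ₁` on the diagonal blocks and `0` on the mixed block. -/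
noncomputable def phi2Basis (p q : Bool × ℤ) : ℂ :=
  if p.1 = q.1 then -2 * phiBasis p q else 0

/-- The three-point Witt bracket on basis elements, valued in `VirV`. -/
noncomputable def brWBasis : Bool × ℤ → Bool × ℤ → VirV
  | (false, m), (false, n) =>
      ((n : ℂ) - m) • (eV (Sum.inl (false, m + n + 1)) +
        (4 : ℂ) • eV (Sum.inl (false, m + n)))
  | (true, m), (true, n) => ((n : ℂ) - m) • eV (Sum.inl (false, m + n - 1))
  | (false, m), (true, n) =>
      ((n : ℂ) - m - 1) • eV (Sum.inl (true, m + n + 1)) +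
        (4 * (n : ℂ) - 4 * m - 2) • eV (Sum.inl (true, m + n))
  | (true, m), (false, n) =>
      -(((m : ℂ) - n - 1) • eV (Sum.inl (true, n + m + 1)) +
        (4 * (m : ℂ) - 4 * n - 2) • eV (Sum.inl (true, n + m)))

/-- The three-point Virasoro bracket on basis elements: Witt bracket plus central
terms `φ₁ c₁ + φ₂ c₂`; `c₁` and `c₂` are central. -/
noncomputable def brVBasis : VirIdx → VirIdx → VirV
  | Sum.inl p, Sum.inl q =>
      brWBasis p q + phiBasis p q • eV (Sum.inr false) + phi2Basis p q • eV (Sum.inr true)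
  | _, _ => 0

/-- The three-point Virasoro bracket, extended bilinearly. -/
noncomputable def brV : VirV →ₗ[ℂ] VirV →ₗ[ℂ] VirV :=
  Finsupp.lift (VirV →ₗ[ℂ] VirV) ℂ VirIdx fun p =>
    Finsupp.lift VirV ℂ VirIdx fun q => brVBasis p q

/-! ### Auxiliary lemmas -/

section Aux

lemma invFact_succ (j : ℤ) : ((j:ℂ)+1) * invFact (j+1) = invFact j := by
  unfold invFact
  rcases lt_trichotomy j (-1) with h | h | h
  · rw [if_neg (by omega), if_neg (by omega), mul_zero]
  · subst h; norm_num
  · have h0 : 0 ≤ j := by omega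
    rw [if_pos (by omega), if_pos h0]
    have ht : (j+1).toNat = j.toNat + 1 := by omega
    have hj : ((j.toNat : ℤ) : ℂ) = (j:ℂ) := by rw [Int.toNat_of_nonneg h0]
    have hne : (j.toNat : ℂ) + 1 ≠ 0 := by
      intro hc
      have h2 : ((j.toNat + 1 : ℕ) : ℂ) = 0 := by push_cast; linear_combination hc
      exact Nat.cast_ne_zero.mpr (Nat.succ_ne_zero _) h2
    rw [ht, ← hj]
    push_cast [Nat.factorial_succ]
    rw [mul_inv, mul_inv_cancel_left₀ hne]

lemma invFact_neg (j : ℤ) (h : j < 0) : invFact j = 0 := by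
  unfold invFact; rw [if_neg (by omega)]

lemma oddDF_rec (t : ℤ) : oddDF (2*t-1) = (2*(t:ℂ)-1) * oddDF (2*t-3) := by
  unfold oddDF
  rcases lt_trichotomy t 1 with h | h | h
  · rcases eq_or_ne t 0 with rfl | h0
    · norm_num [Nat.doubleFactorial, show ((-1:ℤ).toNat) = 0 from rfl]
    · have h1 : t ≤ -1 := by omega
      rw [if_neg (by omega), if_neg (by omega)]
      obtain ⟨a, ha⟩ : ∃ a : ℕ, t = -(a:ℤ) := ⟨(-t).toNat, by omega⟩
      subst ha
      have ha1 : 1 ≤ a := by omega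
      have e1 : ((-(2*(-(a:ℤ))-1)-1)/2).toNat = a := by omega
      have e2 : (-(2*(-(a:ℤ))-1)-2).toNat = 2*a-1 := by omega
      have e3 : ((-(2*(-(a:ℤ))-3)-1)/2).toNat = a+1 := by omega
      have e4 : (-(2*(-(a:ℤ))-3)-2).toNat = 2*a+1 := by omega
      rw [e1, e2, e3, e4]
      have e5 : 2*a+1 = (2*a-1)+2 := by omega
      have hb : ((2*a-1:ℕ):ℂ) = 2*(a:ℂ)-1 := by
        have : ((2*a-1:ℕ):ℤ) = 2*(a:ℤ)-1 := by omega
        exact_mod_cast congrArg (fun z : ℤ => (z:ℂ)) this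
      have hdf : ((2*a-1:ℕ).doubleFactorial : ℂ) ≠ 0 := by
        exact_mod_cast Nat.cast_ne_zero.mpr (Nat.doubleFactorial_pos _).ne'
      have hdf2 : ((2*a+1:ℕ).doubleFactorial : ℂ) ≠ 0 := by
        exact_mod_cast Nat.cast_ne_zero.mpr (Nat.doubleFactorial_pos _).ne'
      rw [← mul_div_assoc, div_eq_div_iff hdf hdf2, e5, Nat.doubleFactorial, pow_succ]
      push_cast
      rw [hb]
      ring
  · subst h; norm_num [Nat.doubleFactorial, show ((-1:ℤ).toNat) = 0 from rfl]
  · rw [if_pos (by omega), if_pos (by omega)]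
    have ht : (2*t-1).toNat = (2*t-3).toNat + 2 := by omega
    rw [ht, Nat.doubleFactorial]
    have hc : (((2*t-3).toNat : ℕ) : ℂ) = 2*(t:ℂ)-3 := by
      have h1 : ((2*t-3).toNat : ℤ) = 2*t-3 := Int.toNat_of_nonneg (by omega)
      exact_mod_cast congrArg (fun z : ℤ => (z:ℂ)) h1
    push_cast
    rw [hc]; ring

/-- The common factor `C(t) = 6·(-1)ᵗ·2ᵗ·(2t-3)‼/(t+1)!` of the mixed cocycle. -/
noncomputable def Cc (t : ℤ) : ℂ := 6 * (-1:ℂ)^t * (2:ℂ)^t * oddDF (2*t-3) * invFact (t+1)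

lemma phiMix_eq (k l : ℤ) : phiMix k l = (((k:ℂ)-1)*k*l) * Cc (k+l) := by
  unfold phiMix Cc
  rw [show 2*(k+l)-3 = 2*k+2*l-3 from by ring]
  ring

lemma Cc_rec (t : ℤ) : ((t:ℂ)+2) * Cc (t+1) = -2*(2*(t:ℂ)-1) * Cc t := by
  unfold Cc
  rw [show 2*(t+1)-3 = 2*t-1 from by ring, oddDF_rec,
      zpow_add_one₀ (by norm_num : (-1:ℂ) ≠ 0), zpow_add_one₀ (by norm_num : (2:ℂ) ≠ 0)]
  have h1 := invFact_succ (t+1)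
  push_cast at h1
  linear_combination (-12*(2*(t:ℂ)-1)*(-1:ℂ)^t*(2:ℂ)^t*oddDF (2*t-3)) * h1

lemma Cc_low {t : ℤ} (h : t ≤ -2) : Cc t = 0 := by
  unfold Cc; rw [invFact_neg _ (by omega), mul_zero]

lemma Cc_combo (s : ℤ) (A B : ℂ) (h : -2*(2*(s:ℂ)-1)*A + ((s:ℂ)+2)*B = 0) :
    A * Cc (s+1) + B * Cc s = 0 := by
  rcases eq_or_ne s (-2) with rfl | hs
  · have h' := h; push_cast at h'
    have hA : A = 0 := by linear_combination h' / 10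
    rw [hA, Cc_low (le_refl (-2)), zero_mul, mul_zero, add_zero]
  · have h2 : ((s:ℂ)+2) ≠ 0 := by
      intro hc; apply hs
      have : ((s:ℤ):ℂ) = ((-2:ℤ):ℂ) := by push_cast; linear_combination hc
      exact_mod_cast this
    have key : ((s:ℂ)+2) * (A * Cc (s+1) + B * Cc s) = 0 := by
      linear_combination A * Cc_rec s + Cc s * h
    exact (mul_eq_zero.mp key).resolve_left h2

lemma cocTTT (m n k : ℤ) :
    ((n:ℂ)-m) * (-phiMix k (m+n-1)) + ((k:ℂ)-n) * (-phiMix m (n+k-1))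
      + ((m:ℂ)-k) * (-phiMix n (k+m-1)) = 0 := by
  simp only [phiMix_eq]
  rw [show k+(m+n-1) = m+n+k-1 from by ring, show m+(n+k-1) = m+n+k-1 from by ring,
      show n+(k+m-1) = m+n+k-1 from by ring]
  push_cast
  ring

lemma cocFFT (m n k : ℤ) :
    ((n:ℂ)-m) * (-phiMix k (m+n+1)) + ((n:ℂ)-m) * (4 * (-phiMix k (m+n)))
    + ((k:ℂ)-n-1) * phiMix (n+k+1) m + (4*(k:ℂ)-4*n-2) * phiMix (n+k) m
    - (((k:ℂ)-m-1) * phiMix (m+k+1) n + (4*(k:ℂ)-4*m-2) * phiMix (m+k) n) = 0 := by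
  simp only [phiMix_eq]
  rw [show k+(m+n+1) = (k+m+n)+1 from by ring, show (n+k+1)+m = (k+m+n)+1 from by ring,
      show (m+k+1)+n = (k+m+n)+1 from by ring, show k+(m+n) = k+m+n from by ring,
      show (n+k)+m = k+m+n from by ring, show (m+k)+n = k+m+n from by ring]
  have hAB : -2*(2*((k+m+n:ℤ):ℂ)-1) *
      (-((n:ℂ)-m) * (((k:ℂ)-1)*k*(m+n+1)) + ((k:ℂ)-n-1)*(((n:ℂ)+k+1-1)*((n:ℂ)+k+1)*m)
        - ((k:ℂ)-m-1)*(((m:ℂ)+k+1-1)*((m:ℂ)+k+1)*n))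
      + (((k+m+n:ℤ):ℂ)+2) *
      (-4*((n:ℂ)-m) * (((k:ℂ)-1)*k*(m+n)) + (4*(k:ℂ)-4*n-2)*(((n:ℂ)+k-1)*((n:ℂ)+k)*m)
        - (4*(k:ℂ)-4*m-2)*(((m:ℂ)+k-1)*((m:ℂ)+k)*n)) = 0 := by
    push_cast; ring
  push_cast
  linear_combination Cc_combo (k+m+n) _ _ hAB

lemma phi2FF (a b : ℤ) : phi2Basis (false,a) (false,b) = -2 * phiBasis (false,a) (false,b) := by
  simp [phi2Basis]

lemma phi2TT (a b : ℤ) : phi2Basis (true,a) (true,b) = -2 * phiBasis (true,a) (true,b) := by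
  simp [phi2Basis]

lemma phi2FT (a b : ℤ) : phi2Basis (false,a) (true,b) = 0 := by simp [phi2Basis]

lemma phi2TF (a b : ℤ) : phi2Basis (true,a) (false,b) = 0 := by simp [phi2Basis]

lemma cocFFFphi (m n k : ℤ) :
    ((n:ℂ)-m) * phiBasis (false, m+n+1) (false,k) + ((n:ℂ)-m) * (4 * phiBasis (false,m+n) (false,k))
    + (((k:ℂ)-n) * phiBasis (false,n+k+1) (false,m) + ((k:ℂ)-n) * (4 * phiBasis (false,n+k) (false,m)))
    + (((m:ℂ)-k) * phiBasis (false,k+m+1) (false,n) + ((m:ℂ)-k) * (4 * phiBasis (false,k+m) (false,n))) = 0 := by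
  simp only [phiBasis]
  simp only [show m+n+1+k = -2 ↔ m+n+k = -3 from by omega,
    show m+n+1+k = -1 ↔ m+n+k = -2 from by omega,
    show m+n+1+k = 0 ↔ m+n+k = -1 from by omega,
    show m+n+k = -2 ↔ m+n+k = -2 from by omega,
    show n+k+1+m = -2 ↔ m+n+k = -3 from by omega,
    show n+k+1+m = -1 ↔ m+n+k = -2 from by omega,
    show n+k+1+m = 0 ↔ m+n+k = -1 from by omega,
    show n+k+m = -2 ↔ m+n+k = -2 from by omega,
    show n+k+m = -1 ↔ m+n+k = -1 from by omega,
    show n+k+m = 0 ↔ m+n+k = 0 from by omega,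
    show k+m+1+n = -2 ↔ m+n+k = -3 from by omega,
    show k+m+1+n = -1 ↔ m+n+k = -2 from by omega,
    show k+m+1+n = 0 ↔ m+n+k = -1 from by omega,
    show k+m+n = -2 ↔ m+n+k = -2 from by omega,
    show k+m+n = -1 ↔ m+n+k = -1 from by omega,
    show k+m+n = 0 ↔ m+n+k = 0 from by omega]
  split_ifs <;>
    first
    | (exfalso; omega)
    | (push_cast; ring1)
    | ((have hk : k = -3-m-n := by omega); subst hk; push_cast; ring1)
    | ((have hk : k = -2-m-n := by omega); subst hk; push_cast; ring1)
    | ((have hk : k = -1-m-n := by omega); subst hk; push_cast; ring1)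
    | ((have hk : k = -m-n := by omega); subst hk; push_cast; ring1)

lemma cocFFTphi (m n k : ℤ) :
    ((n:ℂ)-m) * phiBasis (false, m+n+1) (true,k) + ((n:ℂ)-m) * (4 * phiBasis (false,m+n) (true,k))
    + (((k:ℂ)-n-1) * phiBasis (true,n+k+1) (false,m) + (4*(k:ℂ)-4*n-2) * phiBasis (true,n+k) (false,m))
    - (((k:ℂ)-m-1) * phiBasis (true,m+k+1) (false,n) + (4*(k:ℂ)-4*m-2) * phiBasis (true,m+k) (false,n)) = 0 := by
  simp only [phiBasis]
  linear_combination cocFFT m n k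

lemma cocFTTphi (m n k : ℤ) :
    ((n:ℂ)-m-1) * phiBasis (true, m+n+1) (true,k) + (4*(n:ℂ)-4*m-2) * phiBasis (true,m+n) (true,k)
    + ((k:ℂ)-n) * phiBasis (false,n+k-1) (false,m)
    - (((k:ℂ)-m-1) * phiBasis (true,m+k+1) (true,n) + (4*(k:ℂ)-4*m-2) * phiBasis (true,m+k) (true,n)) = 0 := by
  simp only [phiBasis]
  simp only [show m+n+1+k = 1 ↔ m+n+k = 0 from by omega,
    show m+n+1+k = 0 ↔ m+n+k = -1 from by omega,
    show m+n+k = 1 ↔ m+n+k = 1 from by omega,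
    show m+n+k = 0 ↔ m+n+k = 0 from by omega,
    show n+k-1+m = -2 ↔ m+n+k = -1 from by omega,
    show n+k-1+m = -1 ↔ m+n+k = 0 from by omega,
    show n+k-1+m = 0 ↔ m+n+k = 1 from by omega,
    show m+k+1+n = 1 ↔ m+n+k = 0 from by omega,
    show m+k+1+n = 0 ↔ m+n+k = -1 from by omega,
    show m+k+n = 1 ↔ m+n+k = 1 from by omega,
    show m+k+n = 0 ↔ m+n+k = 0 from by omega]
  split_ifs <;>
    first
    | (exfalso; omega)
    | (push_cast; ring1)
    | ((have hk : k = 1-m-n := by omega); subst hk; push_cast; ring1)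
    | ((have hk : k = -m-n := by omega); subst hk; push_cast; ring1)
    | ((have hk : k = -1-m-n := by omega); subst hk; push_cast; ring1)

lemma cocTTTphi (m n k : ℤ) :
    ((n:ℂ)-m) * phiBasis (false, m+n-1) (true,k) + ((k:ℂ)-n) * phiBasis (false,n+k-1) (true,m)
    + ((m:ℂ)-k) * phiBasis (false,k+m-1) (true,n) = 0 := by
  simp only [phiBasis]
  linear_combination cocTTT m n k

end Aux

section Bracket

lemma brV_e (p q : VirIdx) : brV (eV p) (eV q) = brVBasis p q := by
  simp [brV, eV, Finsupp.lift_apply, Finsupp.sum_single_index]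

lemma brVBasis_inr_left (b : Bool) (q : VirIdx) : brVBasis (Sum.inr b) q = 0 := by
  cases q <;> rfl

lemma brVBasis_inr_right (b : Bool) (q : VirIdx) : brVBasis q (Sum.inr b) = 0 := by
  cases q <;> rfl

lemma brV_inr_right (b : Bool) (x : VirV) : brV x (eV (Sum.inr b)) = 0 := by
  induction x using Finsupp.induction_linear with
  | zero => simp
  | add x y hx hy => rw [map_add, LinearMap.add_apply, hx, hy, add_zero]
  | single a c =>
      have : Finsupp.single a c = c • eV a := by
        simp [eV, Finsupp.smul_single]
      rw [this, map_smul, LinearMap.smul_apply, brV_e, brVBasis_inr_right, smul_zero]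

lemma phiBasis_skew (p q : Bool × ℤ) : phiBasis p q = - phiBasis q p := by
  obtain ⟨a, k⟩ := p; obtain ⟨b, l⟩ := q
  cases a <;> cases b <;> simp only [phiBasis] <;>
    first
    | rw [neg_neg]
    | rfl
    | (split_ifs <;>
        first
        | (exfalso; omega)
        | (push_cast; ring1)
        | ((have hk : k = -2 - l := by omega); subst hk; push_cast; ring1)
        | ((have hk : k = -1 - l := by omega); subst hk; push_cast; ring1)
        | ((have hk : k = 1 - l := by omega); subst hk; push_cast; ring1)
        | ((have hk : k = - l := by omega); subst hk; push_cast; ring1))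

lemma phi2Basis_skew (p q : Bool × ℤ) : phi2Basis p q = - phi2Basis q p := by
  unfold phi2Basis
  by_cases h : p.1 = q.1
  · rw [if_pos h, if_pos h.symm, phiBasis_skew p q]; ring
  · rw [if_neg h, if_neg (fun hc => h hc.symm), neg_zero]

lemma brWBasis_skew (p q : Bool × ℤ) : brWBasis p q = - brWBasis q p := by
  obtain ⟨a, m⟩ := p; obtain ⟨b, n⟩ := q
  cases a <;> cases b <;> simp only [brWBasis] <;>
    first
    | rw [neg_neg]
    | (rw [show n + m + 1 = m + n + 1 from by ring, show n + m = m + n from by ring];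
        match_scalars <;> (push_cast; ring1))
    | (rw [show n + m - 1 = m + n - 1 from by ring];
        match_scalars <;> (push_cast; ring1))
    | module

lemma brVBasis_skew (p q : VirIdx) : brVBasis p q = - brVBasis q p := by
  match p, q with
  | Sum.inr b, q => rw [brVBasis_inr_left, brVBasis_inr_right, neg_zero]
  | Sum.inl p, Sum.inr b => rw [brVBasis_inr_left, brVBasis_inr_right, neg_zero]
  | Sum.inl p, Sum.inl q =>
      show brWBasis p q + _ + _ = -(brWBasis q p + _ + _)
      rw [brWBasis_skew, phiBasis_skew, phi2Basis_skew]
      module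

lemma brV_skew (x y : VirV) : brV x y = - brV y x := by
  induction x using Finsupp.induction_linear with
  | zero => simp
  | add a b ha hb => rw [map_add, LinearMap.add_apply, ha, hb, map_add]; abel
  | single a c =>
      induction y using Finsupp.induction_linear with
      | zero => simp
      | add a' b' ha' hb' => rw [map_add, map_add, LinearMap.add_apply, ha', hb']; abel
      | single a' c' =>
          have h1 : Finsupp.single a c = c • eV a := by simp [eV, Finsupp.smul_single]
          have h2 : Finsupp.single a' c' = c' • eV a' := by simp [eV, Finsupp.smul_single]
          rw [h1, h2]
          simp only [map_smul, LinearMap.smul_apply, brV_e, smul_smul]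
          rw [brVBasis_skew a a', smul_neg, mul_comm]

lemma jacFFF (m n k : ℤ) :
    brV (brV (eV (Sum.inl (false,m))) (eV (Sum.inl (false,n)))) (eV (Sum.inl (false,k)))
    + brV (brV (eV (Sum.inl (false,n))) (eV (Sum.inl (false,k)))) (eV (Sum.inl (false,m)))
    + brV (brV (eV (Sum.inl (false,k))) (eV (Sum.inl (false,m)))) (eV (Sum.inl (false,n))) = 0 := by
  simp only [brV_e, brVBasis, brWBasis, map_add, map_smul, map_neg, LinearMap.add_apply,
    LinearMap.smul_apply, LinearMap.neg_apply, smul_add, brVBasis_inr_left, smul_zero,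
    add_zero, zero_add]
  rw [show m+n+1+k+1 = m+n+k+2 from by ring, show n+k+1+m+1 = m+n+k+2 from by ring,
    show k+m+1+n+1 = m+n+k+2 from by ring, show m+n+1+k = m+n+k+1 from by ring,
    show n+k+1+m = m+n+k+1 from by ring, show k+m+1+n = m+n+k+1 from by ring,
    show n+k+m+1 = m+n+k+1 from by ring, show k+m+n+1 = m+n+k+1 from by ring,
    show n+k+m = m+n+k from by ring, show k+m+n = m+n+k from by ring]
  match_scalars <;>
    first
    | (push_cast; ring1)
    | (simp only [phi2FF]; linear_combination (-2:ℂ) * cocFFFphi m n k)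
    | (linear_combination cocFFFphi m n k)

lemma jacFFT (m n k : ℤ) :
    brV (brV (eV (Sum.inl (false,m))) (eV (Sum.inl (false,n)))) (eV (Sum.inl (true,k)))
    + brV (brV (eV (Sum.inl (false,n))) (eV (Sum.inl (true,k)))) (eV (Sum.inl (false,m)))
    + brV (brV (eV (Sum.inl (true,k))) (eV (Sum.inl (false,m)))) (eV (Sum.inl (false,n))) = 0 := by
  simp only [brV_e, brVBasis, brWBasis, map_add, map_smul, map_neg, LinearMap.add_apply,
    LinearMap.smul_apply, LinearMap.neg_apply, smul_add, brVBasis_inr_left, smul_zero,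
    add_zero, zero_add]
  rw [show m+n+1+k+1 = m+n+k+2 from by ring, show m+(n+k+1)+1 = m+n+k+2 from by ring,
    show n+(m+k+1)+1 = m+n+k+2 from by ring, show m+n+1+k = m+n+k+1 from by ring,
    show m+(n+k+1) = m+n+k+1 from by ring, show m+(n+k) = m+n+k from by ring,
    show n+(m+k+1) = m+n+k+1 from by ring, show n+(m+k) = m+n+k from by ring]
  match_scalars <;>
    first
    | (push_cast; ring1)
    | (simp only [phi2FT, phi2TF]; push_cast; ring1)
    | (linear_combination cocFFTphi m n k)

lemma jacFTT (m n k : ℤ) :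
    brV (brV (eV (Sum.inl (false,m))) (eV (Sum.inl (true,n)))) (eV (Sum.inl (true,k)))
    + brV (brV (eV (Sum.inl (true,n))) (eV (Sum.inl (true,k)))) (eV (Sum.inl (false,m)))
    + brV (brV (eV (Sum.inl (true,k))) (eV (Sum.inl (false,m)))) (eV (Sum.inl (true,n))) = 0 := by
  simp only [brV_e, brVBasis, brWBasis, map_add, map_smul, map_neg, LinearMap.add_apply,
    LinearMap.smul_apply, LinearMap.neg_apply, smul_add, brVBasis_inr_left, smul_zero,
    add_zero, zero_add]
  rw [show m+n+1+k-1 = m+n+k from by ring, show n+k-1+m = m+n+k-1 from by ring,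
    show m+k+1+n-1 = m+n+k from by ring, show m+k+n-1 = m+n+k-1 from by ring,
    show m+n+k-1+1 = m+n+k from by ring]
  match_scalars <;>
    first
    | (push_cast; ring1)
    | (simp only [phi2TT, phi2FF]; linear_combination (-2:ℂ) * cocFTTphi m n k)
    | (linear_combination cocFTTphi m n k)

lemma jacTTT (m n k : ℤ) :
    brV (brV (eV (Sum.inl (true,m))) (eV (Sum.inl (true,n)))) (eV (Sum.inl (true,k)))
    + brV (brV (eV (Sum.inl (true,n))) (eV (Sum.inl (true,k)))) (eV (Sum.inl (true,m)))
    + brV (brV (eV (Sum.inl (true,k))) (eV (Sum.inl (true,m)))) (eV (Sum.inl (true,n))) = 0 := by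
  simp only [brV_e, brVBasis, brWBasis, map_add, map_smul, map_neg, LinearMap.add_apply,
    LinearMap.smul_apply, LinearMap.neg_apply, smul_add, brVBasis_inr_left, smul_zero,
    add_zero, zero_add]
  rw [show m+n-1+k = m+n+k-1 from by ring, show n+k-1+m = m+n+k-1 from by ring,
    show k+m-1+n = m+n+k-1 from by ring, show m+n+k-1+1 = m+n+k from by ring]
  match_scalars <;>
    first
    | (push_cast; ring1)
    | (simp only [phi2FT]; push_cast; ring1)
    | (linear_combination cocTTTphi m n k)

end Bracket

section Main

private lemma rotCAB {M : Type*} [AddCommMonoid M] {A B C : M} (h : C + A + B = 0) :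
    A + B + C = 0 := by
  rw [show A + B + C = C + A + B from by abel]; exact h

private lemma rotBCA {M : Type*} [AddCommMonoid M] {A B C : M} (h : B + C + A = 0) :
    A + B + C = 0 := by
  rw [show A + B + C = B + C + A from by abel]; exact h

private lemma add3 {M : Type*} [AddCommMonoid M] {A1 B1 C1 A2 B2 C2 : M}
    (h1 : A1 + B1 + C1 = 0) (h2 : A2 + B2 + C2 = 0) :
    A1 + A2 + (B1 + B2) + (C1 + C2) = 0 := by
  rw [show A1 + A2 + (B1 + B2) + (C1 + C2) = A1 + B1 + C1 + (A2 + B2 + C2) from by abel,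
    h1, h2, add_zero]

private lemma smul3 {M : Type*} [AddCommMonoid M] [Module ℂ M] {A B C : M} (c : ℂ)
    (h : A + B + C = 0) : c • A + c • B + c • C = 0 := by
  rw [← smul_add, ← smul_add, h, smul_zero]

lemma jacB (p q r : VirIdx) :
    brV (brV (eV p) (eV q)) (eV r) + brV (brV (eV q) (eV r)) (eV p)
      + brV (brV (eV r) (eV p)) (eV q) = 0 := by
  have hzl : ∀ (b : Bool) (u v : VirIdx),
      brV (brV (eV (Sum.inr b)) (eV u)) (eV v) = 0 := by
    intro b u v
    rw [brV_e, brVBasis_inr_left, map_zero, LinearMap.zero_apply]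
  have hzr : ∀ (b : Bool) (u v : VirIdx),
      brV (brV (eV u) (eV (Sum.inr b))) (eV v) = 0 := by
    intro b u v
    rw [brV_e, brVBasis_inr_right, map_zero, LinearMap.zero_apply]
  obtain ⟨a, m⟩ | b := p
  · obtain ⟨a', n⟩ | b := q
    · obtain ⟨a'', k⟩ | b := r
      · cases a <;> cases a' <;> cases a''
        · exact jacFFF m n k
        · exact jacFFT m n k
        · exact rotCAB (jacFFT k m n)
        · exact jacFTT m n k
        · exact rotBCA (jacFFT n k m)
        · exact rotBCA (jacFTT n k m)
        · exact rotCAB (jacFTT k m n)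
        · exact jacTTT m n k
      · rw [hzl, brV_inr_right, hzr]; simp
    · rw [hzr, hzl, brV_inr_right]; simp
  · rw [hzl, hzr, brV_inr_right]; simp

lemma jacV (x y z : VirV) :
    brV (brV x y) z + brV (brV y z) x + brV (brV z x) y = 0 := by
  induction x using Finsupp.induction_linear with
  | zero => simp
  | add x1 x2 h1 h2 =>
      simp only [map_add, LinearMap.add_apply]
      exact add3 h1 h2
  | single a c =>
      induction y using Finsupp.induction_linear with
      | zero => simp
      | add y1 y2 h1 h2 =>
          simp only [map_add, LinearMap.add_apply]
          exact add3 h1 h2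
      | single a' c' =>
          induction z using Finsupp.induction_linear with
          | zero => simp
          | add z1 z2 h1 h2 =>
              simp only [map_add, LinearMap.add_apply]
              exact add3 h1 h2
          | single a'' c'' =>
              rw [show Finsupp.single a c = c • eV a from by simp [eV, Finsupp.smul_single],
                show Finsupp.single a' c' = c' • eV a' from by simp [eV, Finsupp.smul_single],
                show Finsupp.single a'' c'' = c'' • eV a'' from by simp [eV, Finsupp.smul_single]]
              simp only [map_smul, LinearMap.smul_apply, smul_smul, mul_comm, mul_left_comm]
              exact smul3 _ (jacB a a' a'')

end Main

/-- the three-point Virasoro algebra `V = W ⊕ ℂc₁ ⊕ ℂc₂`, with the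
Witt bracket corrected by the cocycles `φ₁, φ₂` and `c₁, c₂` central, is a Lie
algebra: the bracket is alternating and satisfies the Jacobi identity. -/
theorem three_point_virasoro_is_lie_algebra :
    (∀ x : VirV, brV x x = 0) ∧
    ∀ x y z : VirV,
      brV (brV x y) z + brV (brV y z) x + brV (brV z x) y = 0 := by
  constructor
  · intro x
    have h := brV_skew x x
    have h2 : (2:ℂ) • brV x x = 0 := by
      rw [two_smul]; nth_rewrite 1 [h]; abel
    rcases smul_eq_zero.mp h2 with hc | hv
    · exact absurd hc two_ne_zero
    · exact hv
  · exact jacV
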